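/- Assume k is nonincreasing on [0,∞), k(diam X) > 0, and Σ_{x ∈ X} m(x) = 1. Let i ≠ j in X, let B_n = B(i, d(i,j)) be the smallest ball containing both i and j, and let B_j⁰ = B(j, min_{z ≠ j} d(j,z)) be the smallest ball containing j with at least two elements. Then the improper integral ∫₀^∞ ( (exp(tL))_{j,j}/m(j) − (exp(tL))_{i,j}/m(j) ) dt converges and equals (−1/λ(B_j⁰))·(1/m(j)) + Σ_T (1/m(T))·( 1/λ(T) − 1/λ(T⁺) ), where the sum ranges over all balls T of X with B_j⁰ ⊆ T ⊊ B_n. (This quantity is the mean first passage time m_{ij} of the associated continuous-time Markov chain.) -/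

import Mathlib

set_option linter.unusedSectionVars false
set_option linter.unusedVariables false
set_option maxHeartbeats 1000000


open scoped Classical
open Finset

/-- Closed ball of radius `r` around `x`, as a finset. -/
noncomputable def uball {X : Type*} [Fintype X] (d : X → X → ℝ) (x : X) (r : ℝ) : Finset X :=
  Finset.univ.filter fun y => d x y ≤ r

/-- A ball of the ultrametric space: a closed ball of nonnegative radius. -/
def IsBall {X : Type*} [Fintype X] (d : X → X → ℝ) (B : Finset X) : Prop :=
  ∃ x r, 0 ≤ r ∧ B = uball d x r

/-- Diameter of a finite set: maximum of `d` over `B × B` (`0` if `B` is empty). -/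
noncomputable def fdiam {X : Type*} [Fintype X] (d : X → X → ℝ) (B : Finset X) : ℝ :=
  if h : (B ×ˢ B).Nonempty then (B ×ˢ B).sup' h fun p => d p.1 p.2 else 0

/-- Mass of a set: `m(B) = Σ_{x ∈ B} m(x)`. -/
noncomputable def mass {X : Type*} [Fintype X] (m : X → ℝ) (B : Finset X) : ℝ :=
  ∑ x ∈ B, m x

/-- The eigenvalue attached to a ball `B`, computed from a base point `x₀ ∈ B`:
`λ(B) = −(Σ_{y ∉ B} k(d(x₀,y))·m(y) + k(diam B)·m(B))`. -/
noncomputable def lamB {X : Type*} [Fintype X] [DecidableEq X]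
    (d : X → X → ℝ) (k : ℝ → ℝ) (m : X → ℝ) (B : Finset X) (x₀ : X) : ℝ :=
  -((∑ y ∈ Bᶜ, k (d x₀ y) * m y) + k (fdiam d B) * mass m B)

/-- The parent radius of a ball `B ⊊ X` seen from `x ∈ B`: `r⁺ = min{d(x,y) : y ∉ B}`. -/
noncomputable def parentR {X : Type*} [Fintype X] [DecidableEq X]
    (d : X → X → ℝ) (B : Finset X) (x : X) : ℝ :=
  if h : (Bᶜ : Finset X).Nonempty then Bᶜ.inf' h fun y => d x y else 0

/-- The parent ball `B⁺ = B(x, r⁺)` of `B ⊊ X`, computed from a base point `x ∈ B`. -/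
noncomputable def parentB {X : Type*} [Fintype X] [DecidableEq X]
    (d : X → X → ℝ) (B : Finset X) (x : X) : Finset X :=
  uball d x (parentR d B x)

/-- The ultrametric Laplacian matrix:
`L x y = k(d(x,y))·m(y)` off the diagonal and `L x x = −Σ_{z ≠ x} k(d(x,z))·m(z)`. -/
noncomputable def ultraLap {X : Type*} [Fintype X] [DecidableEq X]
    (d : X → X → ℝ) (k : ℝ → ℝ) (m : X → ℝ) : Matrix X X ℝ :=
  fun x y => if y = x then -(∑ z ∈ ({x}ᶜ : Finset X), k (d x z) * m z) else k (d x y) * m y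

/-- The smallest ball containing `x` and `y` and having at least two elements:
`B(x, d(x,y))` for `x ≠ y`, and `B(x, min_{z ≠ x} d(x,z))` for `x = y`. -/
noncomputable def sball {X : Type*} [Fintype X] [DecidableEq X]
    (d : X → X → ℝ) (x y : X) : Finset X :=
  if x = y then
    (if h : (({x}ᶜ : Finset X)).Nonempty then
      uball d x ((({x}ᶜ : Finset X)).inf' h fun z => d x z)
     else uball d x 0)
  else uball d x (d x y)






section MFPT

variable {X : Type*} [Fintype X] [DecidableEq X]

lemma mem_uball {d : X → X → ℝ} {x y : X} {r : ℝ} : y ∈ uball d x r ↔ d x y ≤ r := by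
  simp [uball]

/-- distances from j -/
noncomputable def Rj (d : X → X → ℝ) (j : X) : Finset ℝ := Finset.univ.image (d j)

noncomputable def nr (d : X → X → ℝ) (j : X) (r : ℝ) : ℝ :=
  if h : ((Rj d j).filter (fun s => r < s)).Nonempty then
    ((Rj d j).filter (fun s => r < s)).min' h else r

noncomputable def pr (d : X → X → ℝ) (j : X) (s : ℝ) : ℝ :=
  if h : ((Rj d j).filter (fun t => t < s)).Nonempty then
    ((Rj d j).filter (fun t => t < s)).max' h else s

variable {d : X → X → ℝ} {m : X → ℝ} {j : X}

lemma d_self (hd0 : ∀ x y, d x y = 0 ↔ x = y) (x : X) : d x x = 0 := (hd0 x x).2 rfl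

lemma d_nonneg (hd0 : ∀ x y, d x y = 0 ↔ x = y) (hsymm : ∀ x y, d x y = d y x)
    (hultra : ∀ x y z, d x z ≤ max (d x y) (d y z)) (x y : X) : 0 ≤ d x y := by
  have h := hultra x y x
  rw [d_self hd0, hsymm y x, max_self] at h
  linarith

lemma d_pos (hd0 : ∀ x y, d x y = 0 ↔ x = y) (hsymm : ∀ x y, d x y = d y x)
    (hultra : ∀ x y z, d x z ≤ max (d x y) (d y z)) {x y : X} (h : x ≠ y) : 0 < d x y := by
  have := d_nonneg hd0 hsymm hultra x y
  rcases this.lt_or_eq with h' | h'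
  · exact h'
  · exact absurd ((hd0 x y).1 h'.symm) h

/-- isoceles: if x is outside the ball of radius r around j and y inside, d x y = d j x. -/
lemma d_isoc (hsymm : ∀ x y, d x y = d y x)
    (hultra : ∀ x y z, d x z ≤ max (d x y) (d y z)) {x y : X} {r : ℝ}
    (hx : r < d j x) (hy : d j y ≤ r) : d x y = d j x := by
  apply le_antisymm
  · have h := hultra x j y
    rw [hsymm x j] at h
    exact h.trans (max_le le_rfl (hy.trans hx.le))
  · have h := hultra j y x
    rcases max_cases (d j y) (d y x) with ⟨he, _⟩ | ⟨he, _⟩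
    · rw [he] at h; linarith
    · rw [he, hsymm y x] at h; exact h

lemma mem_Rj {r : ℝ} : r ∈ Rj d j ↔ ∃ y, d j y = r := by simp [Rj]

lemma zero_mem_Rj (hd0 : ∀ x y, d x y = 0 ↔ x = y) : (0 : ℝ) ∈ Rj d j :=
  mem_Rj.2 ⟨j, d_self hd0 j⟩

lemma Rj_nonempty (hd0 : ∀ x y, d x y = 0 ↔ x = y) : (Rj d j).Nonempty :=
  ⟨0, zero_mem_Rj hd0⟩

lemma Rj_nonneg (hd0 : ∀ x y, d x y = 0 ↔ x = y) (hsymm : ∀ x y, d x y = d y x)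
    (hultra : ∀ x y z, d x z ≤ max (d x y) (d y z)) {r : ℝ} (hr : r ∈ Rj d j) : 0 ≤ r := by
  obtain ⟨y, hy⟩ := mem_Rj.1 hr
  exact hy ▸ d_nonneg hd0 hsymm hultra j y

/-- the top radius -/
noncomputable def rtop (d : X → X → ℝ) (j : X) (hd0 : ∀ x y, d x y = 0 ↔ x = y) : ℝ :=
  (Rj d j).max' (Rj_nonempty hd0)

lemma le_rtop (hd0 : ∀ x y, d x y = 0 ↔ x = y) (x : X) : d j x ≤ rtop d j hd0 :=
  Finset.le_max' _ _ (mem_Rj.2 ⟨x, rfl⟩)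

lemma rtop_mem (hd0 : ∀ x y, d x y = 0 ↔ x = y) : rtop d j hd0 ∈ Rj d j :=
  Finset.max'_mem _ _

lemma uball_rtop_eq (hd0 : ∀ x y, d x y = 0 ↔ x = y) :
    uball d j (rtop d j hd0) = Finset.univ := by
  ext x; simp [mem_uball, le_rtop hd0 x]

lemma uball_zero_eq (hd0 : ∀ x y, d x y = 0 ↔ x = y) (hsymm : ∀ x y, d x y = d y x)
    (hultra : ∀ x y z, d x z ≤ max (d x y) (d y z)) : uball d j 0 = {j} := by
  ext x
  simp only [mem_uball, Finset.mem_singleton]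
  constructor
  · intro h
    have := (hd0 j x).1 (le_antisymm h (d_nonneg hd0 hsymm hultra j x))
    exact this.symm
  · rintro rfl; rw [d_self hd0]

lemma j_mem_uball {r : ℝ} (hd0 : ∀ x y, d x y = 0 ↔ x = y) (hr : 0 ≤ r) :
    j ∈ uball d j r := mem_uball.2 (by rw [d_self hd0]; exact hr)

lemma uball_mono {r s : ℝ} (h : r ≤ s) : uball d j r ⊆ uball d j s := fun x hx =>
  mem_uball.2 ((mem_uball.1 hx).trans h)

lemma fdiam_uball (hd0 : ∀ x y, d x y = 0 ↔ x = y) (hsymm : ∀ x y, d x y = d y x)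
    (hultra : ∀ x y z, d x z ≤ max (d x y) (d y z)) {r : ℝ} (hr : r ∈ Rj d j) :
    fdiam d (uball d j r) = r := by
  obtain ⟨y₀, hy₀⟩ := mem_Rj.1 hr
  have hr0 : 0 ≤ r := Rj_nonneg hd0 hsymm hultra hr
  have hj : j ∈ uball d j r := j_mem_uball hd0 hr0
  have hy₀m : y₀ ∈ uball d j r := mem_uball.2 hy₀.le
  have hne : ((uball d j r) ×ˢ (uball d j r)).Nonempty := ⟨(j, j), Finset.mem_product.2 ⟨hj, hj⟩⟩
  rw [fdiam, dif_pos hne]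
  apply le_antisymm
  · apply Finset.sup'_le
    rintro ⟨a, b⟩ hab
    obtain ⟨ha, hb⟩ := Finset.mem_product.1 hab
    calc d a b ≤ max (d a j) (d j b) := hultra a j b
      _ ≤ r := max_le (by rw [← hsymm j a]; exact mem_uball.1 ha) (mem_uball.1 hb)
  · have := Finset.le_sup' (f := fun p : X × X => d p.1 p.2)
      (Finset.mem_product.2 ⟨hj, hy₀m⟩ : (j, y₀) ∈ (uball d j r) ×ˢ (uball d j r))
    simp only [hy₀] at this
    exact this

lemma mass_pos (hm : ∀ x, 0 < m x) {B : Finset X} (hB : B.Nonempty) : 0 < mass m B :=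
  Finset.sum_pos (fun x _ => hm x) hB

lemma nr_spec {r : ℝ} (hd0 : ∀ x y, d x y = 0 ↔ x = y) (hlt : r < rtop d j hd0) :
    nr d j r ∈ Rj d j ∧ r < nr d j r ∧ ∀ s ∈ Rj d j, r < s → nr d j r ≤ s := by
  have hne : ((Rj d j).filter (fun s => r < s)).Nonempty :=
    ⟨rtop d j hd0, Finset.mem_filter.2 ⟨rtop_mem hd0, hlt⟩⟩
  rw [nr, dif_pos hne]
  have h1 := Finset.min'_mem _ hne
  rw [Finset.mem_filter] at h1
  exact ⟨h1.1, h1.2, fun s hs hrs => Finset.min'_le _ _ (Finset.mem_filter.2 ⟨hs, hrs⟩)⟩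

lemma pr_spec {s : ℝ} (hd0 : ∀ x y, d x y = 0 ↔ x = y) (hs : 0 < s) :
    pr d j s ∈ Rj d j ∧ pr d j s < s ∧ ∀ t ∈ Rj d j, t < s → t ≤ pr d j s := by
  have hne : ((Rj d j).filter (fun t => t < s)).Nonempty :=
    ⟨0, Finset.mem_filter.2 ⟨zero_mem_Rj hd0, hs⟩⟩
  rw [pr, dif_pos hne]
  have h1 := Finset.max'_mem _ hne
  rw [Finset.mem_filter] at h1
  refine ⟨h1.1, h1.2, fun t ht hts => Finset.le_max' _ t ?_⟩
  exact Finset.mem_filter.2 ⟨ht, hts⟩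

lemma pr_nr (hd0 : ∀ x y, d x y = 0 ↔ x = y) (hsymm : ∀ x y, d x y = d y x)
    (hultra : ∀ x y z, d x z ≤ max (d x y) (d y z)) {r : ℝ} (hr : r ∈ Rj d j)
    (hlt : r < rtop d j hd0) : pr d j (nr d j r) = r := by
  obtain ⟨hmem, hgt, hmin⟩ := nr_spec hd0 hlt
  have h0 : 0 < nr d j r := lt_of_le_of_lt (Rj_nonneg hd0 hsymm hultra hr) hgt
  obtain ⟨pmem, plt, pmax⟩ := pr_spec hd0 h0
  have h1 : r ≤ pr d j (nr d j r) := pmax r hr hgt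
  rcases h1.lt_or_eq with h2 | h2
  · exact absurd (hmin _ pmem h2) (not_le.2 plt)
  · exact h2.symm

lemma nr_pr (hd0 : ∀ x y, d x y = 0 ↔ x = y) {s : ℝ} (hs : s ∈ Rj d j) (h0 : 0 < s) :
    nr d j (pr d j s) = s := by
  obtain ⟨pmem, plt, pmax⟩ := pr_spec hd0 h0
  have hlt : pr d j s < rtop d j hd0 := lt_of_lt_of_le plt (Finset.le_max' _ _ hs)
  obtain ⟨nmem, ngt, nmin⟩ := nr_spec hd0 hlt
  have h1 : nr d j (pr d j s) ≤ s := nmin s hs plt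
  rcases h1.lt_or_eq with h2 | h2
  · exact absurd (pmax _ nmem h2) (not_le.2 ngt)
  · exact h2

end MFPT

lemma exp_mulVec_eigen {n : Type*} [Fintype n] [DecidableEq n] (A : Matrix n n ℝ)
    (v : n → ℝ) (c : ℝ) (h : A.mulVec v = c • v) :
    (NormedSpace.exp A).mulVec v = Real.exp c • v := by
  letI : SeminormedRing (Matrix n n ℝ) := Matrix.linftyOpSemiNormedRing
  letI : NormedRing (Matrix n n ℝ) := Matrix.linftyOpNormedRing
  letI : NormedAlgebra ℝ (Matrix n n ℝ) := Matrix.linftyOpNormedAlgebra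
  have hpow : ∀ N : ℕ, (A ^ N).mulVec v = c ^ N • v := by
    intro N
    induction N with
    | zero => simp [Matrix.one_mulVec]
    | succ N ih =>
        rw [pow_succ, ← Matrix.mulVec_mulVec, h, Matrix.mulVec_smul, ih, smul_smul, pow_succ,
          mul_comm]
  let Φ₀ : Matrix n n ℝ →ₗ[ℝ] (n → ℝ) :=
    { toFun := fun M => M.mulVec v
      map_add' := fun M N => Matrix.add_mulVec M N v
      map_smul' := fun c M => Matrix.smul_mulVec c M v }
  let Φ := Φ₀.toContinuousLinearMap
  have h1 : HasSum (fun N : ℕ => ((Nat.factorial N : ℝ)⁻¹) • A ^ N) (NormedSpace.exp A) :=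
    NormedSpace.exp_series_hasSum_exp' A
  have h2 := h1.mapL Φ
  have h2' : HasSum (fun N : ℕ => ((Nat.factorial N : ℝ)⁻¹ • c ^ N) • v)
      ((NormedSpace.exp A).mulVec v) := by
    convert h2 using 2 with N
    show _ = ((Nat.factorial N : ℝ)⁻¹ • A ^ N).mulVec v
    rw [Matrix.smul_mulVec, hpow, smul_smul, smul_eq_mul]
    all_goals rfl
  have h3 : HasSum (fun N : ℕ => ((Nat.factorial N : ℝ)⁻¹) • c ^ N) (Real.exp c) := by
    rw [Real.exp_eq_exp_ℝ]
    exact NormedSpace.exp_series_hasSum_exp' c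
  exact h2'.unique (h3.smul_const v)



section MFPT2

variable {X : Type*} [Fintype X] [DecidableEq X]
variable {d : X → X → ℝ} {m : X → ℝ} {j : X} {k : ℝ → ℝ}

noncomputable def av (d : X → X → ℝ) (m : X → ℝ) (j : X) (r : ℝ) : ℝ := (mass m (uball d j r))⁻¹

noncomputable def fv (d : X → X → ℝ) (m : X → ℝ) (j : X) (r : ℝ) : X → ℝ := fun x =>
  (if d j x ≤ r then av d m j r else 0) - (if d j x ≤ nr d j r then av d m j (nr d j r) else 0)

lemma sum_row_mem {B : Finset X} {x : X} (hx : x ∈ B) :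
    ∑ y ∈ B, ultraLap d k m x y = -∑ z ∈ Bᶜ, k (d x z) * m z := by
  have key : ∀ C : Finset X, ∑ z ∈ Cᶜ, k (d x z) * m z
      = ∑ z, k (d x z) * m z - ∑ z ∈ C, k (d x z) * m z := by
    intro C; rw [eq_sub_iff_add_eq, Finset.sum_compl_add_sum]
  have h1 : ∑ y ∈ B, ultraLap d k m x y
      = ultraLap d k m x x + ∑ y ∈ B.erase x, k (d x y) * m y := by
    rw [← Finset.add_sum_erase _ _ hx]
    congr 1
    refine Finset.sum_congr rfl fun y hy => ?_
    simp [ultraLap, Finset.ne_of_mem_erase hy]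
  have h0 : ultraLap d k m x x = -(∑ z ∈ ({x}ᶜ : Finset X), k (d x z) * m z) := by
    simp [ultraLap]
  rw [h1, h0, key {x}, Finset.sum_singleton, Finset.sum_erase_eq_sub hx, key B]
  ring

lemma sum_row_not_mem (hsymm : ∀ x y, d x y = d y x)
    (hultra : ∀ x y z, d x z ≤ max (d x y) (d y z)) {ρ : ℝ} {x : X} (hx : ρ < d j x) :
    ∑ y ∈ uball d j ρ, ultraLap d k m x y = k (d j x) * mass m (uball d j ρ) := by
  rw [mass, Finset.mul_sum]
  refine Finset.sum_congr rfl fun y hy => ?_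
  have hy' : d j y ≤ ρ := mem_uball.1 hy
  have hne : y ≠ x := by rintro rfl; exact absurd hy' (not_le.2 hx)
  simp only [ultraLap, if_neg hne, d_isoc hsymm hultra hx hy', mul_assoc]

lemma sum_compl_recenter (hsymm : ∀ x y, d x y = d y x)
    (hultra : ∀ x y z, d x z ≤ max (d x y) (d y z)) {ρ : ℝ} {x : X} (hx : d j x ≤ ρ) :
    ∑ z ∈ (uball d j ρ)ᶜ, k (d x z) * m z = ∑ z ∈ (uball d j ρ)ᶜ, k (d j z) * m z := by
  refine Finset.sum_congr rfl fun z hz => ?_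
  have hz' : ρ < d j z := lt_of_not_ge (fun h => (Finset.mem_compl.1 hz) (mem_uball.2 h))
  rw [hsymm x z, d_isoc hsymm hultra hz' hx]

lemma lap_fv_eigen (hd0 : ∀ x y, d x y = 0 ↔ x = y) (hsymm : ∀ x y, d x y = d y x)
    (hultra : ∀ x y z, d x z ≤ max (d x y) (d y z)) (hm : ∀ x, 0 < m x) {r : ℝ}
    (hr : r ∈ Rj d j) (hlt : r < rtop d j hd0) :
    (ultraLap d k m).mulVec (fv d m j r) =
      lamB d k m (uball d j (nr d j r)) j • fv d m j r := by
  obtain ⟨hnmem, hngt, hnmin⟩ := nr_spec (j := j) hd0 hlt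
  set r' := nr d j r with hr'
  have hr0 : 0 ≤ r := Rj_nonneg hd0 hsymm hultra hr
  have hr'0 : 0 ≤ r' := hr0.trans hngt.le
  set B := uball d j r with hB
  set B' := uball d j r' with hB'
  have hBB' : B ⊆ B' := uball_mono hngt.le
  set a := av d m j r with ha
  set a' := av d m j r' with ha'
  set M : ℝ := mass m B with hM
  set M' : ℝ := mass m B' with hM'
  have hMpos : 0 < M := mass_pos hm ⟨j, j_mem_uball hd0 hr0⟩
  have hM'pos : 0 < M' := mass_pos hm ⟨j, j_mem_uball hd0 hr'0⟩
  have haM : a * M = 1 := by rw [ha, av, ← hB, ← hM]; exact inv_mul_cancel₀ hMpos.ne'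
  have ha'M' : a' * M' = 1 := by rw [ha', av, ← hB', ← hM']; exact inv_mul_cancel₀ hM'pos.ne'
  set S : ℝ := ∑ z ∈ B'ᶜ, k (d j z) * m z with hS
  have hlam : lamB d k m B' j = -(S + k r' * M') := by
    rw [lamB, fdiam_uball hd0 hsymm hultra hnmem, ← hM', ← hS]
  -- the sum over B' \ B
  have hWval : ∑ z ∈ B' \ B, k (d j z) * m z = k r' * (M' - M) := by
    have : ∀ z ∈ B' \ B, k (d j z) * m z = k r' * m z := by
      intro z hz
      obtain ⟨hz1, hz2⟩ := Finset.mem_sdiff.1 hz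
      have h1 : d j z ≤ r' := mem_uball.1 hz1
      have h2 : r < d j z := lt_of_not_ge (fun h => hz2 (mem_uball.2 h))
      have h3 : r' ≤ d j z := hnmin _ (mem_Rj.2 ⟨z, rfl⟩) h2
      rw [le_antisymm h1 h3]
    rw [Finset.sum_congr rfl this, ← Finset.mul_sum, hM, hM', mass, mass,
      Finset.sum_sdiff_eq_sub hBB']
  have hBc : ∑ z ∈ Bᶜ, k (d j z) * m z = S + k r' * (M' - M) := by
    have h1 : ∑ z ∈ Bᶜ, k (d j z) * m z
        = ∑ z, k (d j z) * m z - ∑ z ∈ B, k (d j z) * m z := by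
      rw [eq_sub_iff_add_eq, Finset.sum_compl_add_sum]
    have h2 : S = ∑ z, k (d j z) * m z - ∑ z ∈ B', k (d j z) * m z := by
      rw [hS, eq_sub_iff_add_eq, Finset.sum_compl_add_sum]
    have h3 : ∑ z ∈ B' \ B, k (d j z) * m z
        = ∑ z ∈ B', k (d j z) * m z - ∑ z ∈ B, k (d j z) * m z :=
      Finset.sum_sdiff_eq_sub hBB'
    rw [h1, h2, ← hWval, h3]; ring
  funext x
  have hmv : (ultraLap d k m).mulVec (fv d m j r) x
      = a * (∑ y ∈ B, ultraLap d k m x y) - a' * (∑ y ∈ B', ultraLap d k m x y) := by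
    have hexp : ∀ y, ultraLap d k m x y * fv d m j r y
        = (if d j y ≤ r then ultraLap d k m x y * a else 0)
          - (if d j y ≤ r' then ultraLap d k m x y * a' else 0) := by
      intro y
      rw [fv, ← hr']
      split_ifs <;> ring
    have hsf : ∀ (ρ c : ℝ), (∑ y, if d j y ≤ ρ then ultraLap d k m x y * c else 0)
        = c * ∑ y ∈ uball d j ρ, ultraLap d k m x y := by
      intro ρ c
      have h4 : ∑ y ∈ uball d j ρ, ultraLap d k m x y * c
          = ∑ y, if d j y ≤ ρ then ultraLap d k m x y * c else 0 :=
        Finset.sum_filter _ _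
      rw [← h4, ← Finset.sum_mul]; ring
    rw [Matrix.mulVec, dotProduct]
    rw [Finset.sum_congr rfl fun y _ => hexp y, Finset.sum_sub_distrib, hsf, hsf, ← hB, ← hB']
  have hfvx : fv d m j r x
      = (if d j x ≤ r then a else 0) - (if d j x ≤ r' then a' else 0) := rfl
  rw [Pi.smul_apply, hmv, hfvx, hlam, smul_eq_mul]
  by_cases hx1 : d j x ≤ r
  · have hx2 : d j x ≤ r' := hx1.trans hngt.le
    have hxB : x ∈ B := mem_uball.2 hx1
    have hxB' : x ∈ B' := mem_uball.2 hx2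
    rw [if_pos hx1, if_pos hx2, sum_row_mem hxB, sum_row_mem hxB',
      sum_compl_recenter hsymm hultra hx1, sum_compl_recenter hsymm hultra hx2, ← hS, hBc]
    linear_combination (k r') * haM - (k r') * ha'M'
  · by_cases hx2 : d j x ≤ r'
    · have hxB' : x ∈ B' := mem_uball.2 hx2
      have hdx : d j x = r' := by
        have h2 : r < d j x := lt_of_not_ge hx1
        exact le_antisymm hx2 (hnmin _ (mem_Rj.2 ⟨x, rfl⟩) h2)
      rw [if_neg hx1, if_pos hx2, sum_row_mem hxB',
        sum_compl_recenter hsymm hultra hx2, ← hS,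
        sum_row_not_mem hsymm hultra (lt_of_not_ge hx1), ← hM, hdx]
      linear_combination (k r') * haM - (k r') * ha'M'
    · rw [if_neg hx1, if_neg hx2,
        sum_row_not_mem hsymm hultra (lt_of_not_ge hx1),
        sum_row_not_mem hsymm hultra (lt_of_not_ge hx2), ← hM, ← hM']
      linear_combination (k (d j x)) * haM - (k (d j x)) * ha'M'

end MFPT2

section MFPT3

variable {X : Type*} [Fintype X] [DecidableEq X]
variable {d : X → X → ℝ} {m : X → ℝ} {j : X} {k : ℝ → ℝ}

lemma lap_const : (ultraLap d k m).mulVec (fun _ => (1:ℝ)) = (0:ℝ) • (fun _ => (1:ℝ)) := by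
  funext x
  have h := sum_row_mem (d := d) (k := k) (m := m) (B := Finset.univ) (x := x)
    (Finset.mem_univ x)
  simp only [Finset.compl_univ, Finset.sum_empty, neg_zero] at h
  simp [Matrix.mulVec, dotProduct, h]

lemma mem_erase_rtop {r : ℝ} (hd0 : ∀ x y, d x y = 0 ↔ x = y) :
    r ∈ (Rj d j).erase (rtop d j hd0) ↔ r ∈ Rj d j ∧ r < rtop d j hd0 := by
  rw [Finset.mem_erase]
  constructor
  · rintro ⟨hne, hmem⟩
    exact ⟨hmem, lt_of_le_of_ne (Finset.le_max' _ _ hmem) hne⟩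
  · rintro ⟨hmem, hlt⟩
    exact ⟨hlt.ne, hmem⟩

lemma mem_erase_zero (hd0 : ∀ x y, d x y = 0 ↔ x = y) (hsymm : ∀ x y, d x y = d y x)
    (hultra : ∀ x y z, d x z ≤ max (d x y) (d y z)) {s : ℝ} :
    s ∈ (Rj d j).erase 0 ↔ s ∈ Rj d j ∧ 0 < s := by
  rw [Finset.mem_erase]
  constructor
  · rintro ⟨hne, hmem⟩
    exact ⟨hmem, lt_of_le_of_ne (Rj_nonneg hd0 hsymm hultra hmem) (Ne.symm hne)⟩
  · rintro ⟨hmem, hpos⟩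
    exact ⟨hpos.ne', hmem⟩

lemma delta_decomp (hd0 : ∀ x y, d x y = 0 ↔ x = y) (hsymm : ∀ x y, d x y = d y x)
    (hultra : ∀ x y z, d x z ≤ max (d x y) (d y z))
    (hprob : ∑ x, m x = 1) (x : X) :
    (if x = j then (m j)⁻¹ else 0)
      = (∑ r ∈ (Rj d j).erase (rtop d j hd0), fv d m j r x) + 1 := by
  set g : ℝ → ℝ := fun ρ => if d j x ≤ ρ then av d m j ρ else 0 with hg
  have hfv : ∀ r, fv d m j r x = g r - g (nr d j r) := fun r => rfl
  have hswap : ∑ r ∈ (Rj d j).erase (rtop d j hd0), g (nr d j r)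
      = ∑ s ∈ (Rj d j).erase 0, g s := by
    refine Finset.sum_nbij' (nr d j) (pr d j) ?_ ?_ ?_ ?_ ?_
    · intro r hr
      obtain ⟨hmem, hlt⟩ := (mem_erase_rtop hd0).1 hr
      obtain ⟨h1, h2, _⟩ := nr_spec (j := j) hd0 hlt
      exact (mem_erase_zero hd0 hsymm hultra).2
        ⟨h1, lt_of_le_of_lt (Rj_nonneg hd0 hsymm hultra hmem) h2⟩
    · intro s hs
      obtain ⟨hmem, hpos⟩ := (mem_erase_zero hd0 hsymm hultra).1 hs
      obtain ⟨h1, h2, _⟩ := pr_spec (j := j) hd0 hpos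
      exact (mem_erase_rtop hd0).2 ⟨h1, lt_of_lt_of_le h2 (Finset.le_max' _ _ hmem)⟩
    · intro r hr
      obtain ⟨hmem, hlt⟩ := (mem_erase_rtop hd0).1 hr
      exact pr_nr hd0 hsymm hultra hmem hlt
    · intro s hs
      obtain ⟨hmem, hpos⟩ := (mem_erase_zero hd0 hsymm hultra).1 hs
      exact nr_pr hd0 hmem hpos
    · intro r _; rfl
  have hrtop_mem : rtop d j hd0 ∈ Rj d j := rtop_mem hd0
  have h0mem : (0:ℝ) ∈ Rj d j := zero_mem_Rj hd0
  have hsum : ∑ r ∈ (Rj d j).erase (rtop d j hd0), fv d m j r x = g 0 - g (rtop d j hd0) := by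
    rw [Finset.sum_congr rfl fun r _ => hfv r, Finset.sum_sub_distrib, hswap,
      Finset.sum_erase_eq_sub hrtop_mem, Finset.sum_erase_eq_sub h0mem]
    ring
  have hg0 : g 0 = if x = j then (m j)⁻¹ else 0 := by
    simp only [hg]
    by_cases hx : x = j
    · subst hx
      rw [if_pos (le_of_eq (d_self hd0 x)), if_pos rfl, av, uball_zero_eq hd0 hsymm hultra,
        mass, Finset.sum_singleton]
    · rw [if_neg, if_neg hx]
      intro hle
      exact hx ((hd0 j x).1 (le_antisymm hle (d_nonneg hd0 hsymm hultra j x))).symm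
  have hgtop : g (rtop d j hd0) = 1 := by
    simp only [hg]
    simp only [if_pos (le_rtop hd0 x)]
    rw [av, uball_rtop_eq hd0, mass]
    rw [show ∑ x ∈ Finset.univ, m x = 1 from hprob]
    norm_num
  rw [hsum, hg0, hgtop]
  ring

end MFPT3

section MFPT4

variable {X : Type*} [Fintype X] [DecidableEq X]
variable {d : X → X → ℝ} {m : X → ℝ} {j : X} {k : ℝ → ℝ}

lemma exp_entry (hd0 : ∀ x y, d x y = 0 ↔ x = y) (hsymm : ∀ x y, d x y = d y x)
    (hultra : ∀ x y z, d x z ≤ max (d x y) (d y z)) (hm : ∀ x, 0 < m x)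
    (hprob : ∑ x, m x = 1) (t : ℝ) (x : X) :
    NormedSpace.exp (t • ultraLap d k m) x j
      = m j * ((∑ r ∈ (Rj d j).erase (rtop d j hd0),
          Real.exp (t * lamB d k m (uball d j (nr d j r)) j) * fv d m j r x) + 1) := by
  set E := NormedSpace.exp (t • ultraLap d k m) with hE
  set F := (Rj d j).erase (rtop d j hd0) with hF
  -- the delta vector at j
  set w : X → ℝ := fun y => if y = j then 1 else 0 with hw
  have hentry : E x j = E.mulVec w x := by
    simp [Matrix.mulVec, dotProduct, hw, mul_ite]
  have hwdec : w = m j • ((∑ r ∈ F, fv d m j r) + (fun _ => (1:ℝ))) := by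
    funext y
    have hd := delta_decomp (m := m) (j := j) hd0 hsymm hultra hprob y
    simp only [Pi.smul_apply, Pi.add_apply, Finset.sum_apply, smul_eq_mul, hw, ← hF]
    rw [← hd]
    by_cases hy : y = j
    · rw [if_pos hy, if_pos hy, mul_inv_cancel₀ (hm j).ne']
    · rw [if_neg hy, if_neg hy, mul_zero]
  have heig : ∀ r ∈ F, E.mulVec (fv d m j r)
      = Real.exp (t * lamB d k m (uball d j (nr d j r)) j) • fv d m j r := by
    intro r hr
    obtain ⟨hmem, hlt⟩ := (mem_erase_rtop hd0).1 hr
    apply exp_mulVec_eigen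
    rw [Matrix.smul_mulVec, lap_fv_eigen hd0 hsymm hultra hm hmem hlt, smul_smul]
  have hconst : E.mulVec (fun _ => (1:ℝ)) = fun _ => (1:ℝ) := by
    have h1 : (t • ultraLap d k m).mulVec (fun _ => (1:ℝ)) = (0:ℝ) • (fun _ => (1:ℝ)) := by
      rw [Matrix.smul_mulVec, lap_const]
      simp
    have := exp_mulVec_eigen (t • ultraLap d k m) (fun _ => (1:ℝ)) 0 h1
    simpa using this
  have hlin : E.mulVec w
      = m j • ((∑ r ∈ F, E.mulVec (fv d m j r)) + E.mulVec (fun _ => (1:ℝ))) := by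
    rw [hwdec]
    have h1 : ∀ v : X → ℝ, E.mulVec v = E.mulVecLin v := fun v => rfl
    simp only [h1]
    rw [map_smul, map_add, map_sum]
  rw [hentry, hlin, hconst]
  simp only [Pi.smul_apply, Pi.add_apply, Finset.sum_apply, smul_eq_mul]
  congr 1
  refine congrArg₂ _ (Finset.sum_congr rfl fun r hr => ?_) rfl
  rw [heig r hr]
  simp

lemma integrand_eq (hd0 : ∀ x y, d x y = 0 ↔ x = y) (hsymm : ∀ x y, d x y = d y x)
    (hultra : ∀ x y z, d x z ≤ max (d x y) (d y z)) (hm : ∀ x, 0 < m x)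
    (hprob : ∑ x, m x = 1) {i : X} (hij : i ≠ j) (t : ℝ) :
    NormedSpace.exp (t • ultraLap d k m) j j / m j
      - NormedSpace.exp (t • ultraLap d k m) i j / m j
      = ∑ r ∈ (Rj d j).filter (fun s => s < d j i),
          Real.exp (t * lamB d k m (uball d j (nr d j r)) j)
            * (fv d m j r j - fv d m j r i) := by
  have hji : 0 < d j i := d_pos hd0 hsymm hultra (Ne.symm hij)
  rw [exp_entry hd0 hsymm hultra hm hprob t j, exp_entry hd0 hsymm hultra hm hprob t i,
    mul_comm, mul_div_assoc, div_self (hm j).ne', mul_one,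
    mul_comm, mul_div_assoc, div_self (hm j).ne', mul_one]
  rw [add_sub_add_comm, sub_self, add_zero, ← Finset.sum_sub_distrib]
  have hsub : (Rj d j).filter (fun s => s < d j i) ⊆ (Rj d j).erase (rtop d j hd0) := by
    intro r hr
    obtain ⟨hmem, hlt⟩ := Finset.mem_filter.1 hr
    exact (mem_erase_rtop hd0).2 ⟨hmem, lt_of_lt_of_le hlt (le_rtop hd0 i)⟩
  rw [← Finset.sum_subset hsub ?_]
  · exact Finset.sum_congr rfl fun r _ => by ring
  · intro r hr hnr
    obtain ⟨hmem, hlt⟩ := (mem_erase_rtop hd0).1 hr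
    have hge : d j i ≤ r := by
      by_contra hc
      exact hnr (Finset.mem_filter.2 ⟨hmem, lt_of_not_ge hc⟩)
    have hr0 : 0 ≤ r := Rj_nonneg hd0 hsymm hultra hmem
    obtain ⟨_, hngt, _⟩ := nr_spec (j := j) hd0 hlt
    have h1 : fv d m j r j = fv d m j r i := by
      rw [fv, fv]
      rw [if_pos (by rw [d_self hd0]; exact hr0), if_pos (by rw [d_self hd0]; exact hr0.trans hngt.le),
        if_pos hge, if_pos (hge.trans hngt.le)]
    simp [h1]

end MFPT4

section MFPT5
open MeasureTheory

lemma exp_integrable_neg {lam : ℝ} (hlam : lam < 0) :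
    IntegrableOn (fun t : ℝ => Real.exp (t * lam)) (Set.Ioi 0) := by
  have hb : 0 < -lam := neg_pos.2 hlam
  have hfun : (fun t : ℝ => Real.exp (t * lam)) = fun t => Real.exp (-(-lam) * t) := by
    funext t; ring_nf
  rw [hfun]
  exact exp_neg_integrableOn_Ioi 0 hb

lemma exp_integral_neg {lam : ℝ} (hlam : lam < 0) :
    ∫ t in Set.Ioi (0:ℝ), Real.exp (t * lam) = -lam⁻¹ := by
  have hb : 0 < -lam := neg_pos.2 hlam
  have hfun : ∀ t : ℝ, Real.exp (t * lam) = Real.exp (-(-lam * t)) := by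
    intro t; ring_nf
  calc ∫ t in Set.Ioi (0:ℝ), Real.exp (t * lam)
      = ∫ t in Set.Ioi (0:ℝ), Real.exp (-(-lam * t)) := by
        exact integral_congr_ae (Filter.EventuallyEq.of_eq (funext hfun))
    _ = (-lam)⁻¹ • ∫ u in Set.Ioi (-lam * 0), Real.exp (-u) := by
        exact integral_comp_mul_left_Ioi (fun u => Real.exp (-u)) 0 hb
    _ = -lam⁻¹ := by
        rw [mul_zero, integral_exp_neg_Ioi_zero, smul_eq_mul, mul_one, inv_neg]

variable {X : Type*} [Fintype X] [DecidableEq X]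
variable {d : X → X → ℝ} {m : X → ℝ} {j : X} {k : ℝ → ℝ}

lemma dist_le_fdiam_univ (x y : X) : d x y ≤ fdiam d (Finset.univ : Finset X) := by
  have hne : ((Finset.univ : Finset X) ×ˢ Finset.univ).Nonempty :=
    ⟨(x, y), Finset.mem_product.2 ⟨Finset.mem_univ x, Finset.mem_univ y⟩⟩
  rw [fdiam, dif_pos hne]
  have hmem : ((x, y) : X × X) ∈ ((Finset.univ : Finset X) ×ˢ (Finset.univ : Finset X)) := by
    simp
  exact Finset.le_sup' (f := fun p : X × X => d p.1 p.2) hmem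

lemma k_pos_at (hd0 : ∀ x y, d x y = 0 ↔ x = y) (hsymm : ∀ x y, d x y = d y x)
    (hultra : ∀ x y z, d x z ≤ max (d x y) (d y z))
    (hk : ∀ a b, 0 ≤ a → a ≤ b → k b ≤ k a)
    (hgap : 0 < k (fdiam d (Finset.univ : Finset X))) {s : ℝ} (hs : s ∈ Rj d j) :
    0 < k s := by
  obtain ⟨y, hy⟩ := mem_Rj.1 hs
  have h1 : s ≤ fdiam d (Finset.univ : Finset X) := hy ▸ dist_le_fdiam_univ j y
  exact lt_of_lt_of_le hgap (hk s _ (Rj_nonneg hd0 hsymm hultra hs) h1)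

lemma lamB_neg (hd0 : ∀ x y, d x y = 0 ↔ x = y) (hsymm : ∀ x y, d x y = d y x)
    (hultra : ∀ x y z, d x z ≤ max (d x y) (d y z)) (hm : ∀ x, 0 < m x)
    (hk : ∀ a b, 0 ≤ a → a ≤ b → k b ≤ k a)
    (hgap : 0 < k (fdiam d (Finset.univ : Finset X))) {s : ℝ} (hs : s ∈ Rj d j) :
    lamB d k m (uball d j s) j < 0 := by
  rw [lamB, fdiam_uball hd0 hsymm hultra hs]
  have h1 : 0 ≤ ∑ y ∈ (uball d j s)ᶜ, k (d j y) * m y := by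
    refine Finset.sum_nonneg fun y _ => ?_
    exact mul_nonneg (k_pos_at hd0 hsymm hultra hk hgap (mem_Rj.2 ⟨y, rfl⟩)).le (hm y).le
  have h2 : 0 < k s * mass m (uball d j s) :=
    mul_pos (k_pos_at hd0 hsymm hultra hk hgap hs)
      (mass_pos hm ⟨j, j_mem_uball hd0 (Rj_nonneg hd0 hsymm hultra hs)⟩)
  linarith

end MFPT5


section MFPT6

variable {X : Type*} [Fintype X] [DecidableEq X]
variable {d : X → X → ℝ} {m : X → ℝ} {j : X} {k : ℝ → ℝ}

lemma uball_recenter (hsymm : ∀ x y, d x y = d y x)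
    (hultra : ∀ x y z, d x z ≤ max (d x y) (d y z)) {x y : X} {r : ℝ}
    (h : y ∈ uball d x r) : uball d y r = uball d x r := by
  have hxy : d x y ≤ r := mem_uball.1 h
  ext z
  simp only [mem_uball]
  constructor
  · intro hz
    exact (hultra x y z).trans (max_le hxy hz)
  · intro hz
    refine (hultra y x z).trans (max_le ?_ hz)
    rw [hsymm y x]; exact hxy

lemma ball_canonical (hd0 : ∀ x y, d x y = 0 ↔ x = y) (hsymm : ∀ x y, d x y = d y x)
    (hultra : ∀ x y z, d x z ≤ max (d x y) (d y z)) {T : Finset X}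
    (hT : IsBall d T) (hj : j ∈ T) : ∃ s ∈ Rj d j, T = uball d j s := by
  obtain ⟨x, r, hr0, rfl⟩ := hT
  have hTj : uball d x r = uball d j r := (uball_recenter hsymm hultra hj).symm
  obtain ⟨y₀, hy₀mem, hy₀⟩ :=
    Finset.exists_mem_eq_sup' (⟨j, hj⟩ : (uball d x r).Nonempty) (d j)
  refine ⟨(uball d x r).sup' ⟨j, hj⟩ (d j), mem_Rj.2 ⟨y₀, hy₀.symm⟩, ?_⟩
  have h2 : (uball d x r).sup' ⟨j, hj⟩ (d j) ≤ r := by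
    rw [hy₀]
    exact mem_uball.1 (hTj ▸ hy₀mem)
  apply Finset.Subset.antisymm
  · intro z hz
    exact mem_uball.2 (Finset.le_sup' (d j) hz)
  · intro z hz
    rw [hTj]
    exact mem_uball.2 ((mem_uball.1 hz).trans h2)

lemma uball_subset_iff (hd0 : ∀ x y, d x y = 0 ↔ x = y) {r s : ℝ} (hr : r ∈ Rj d j) :
    uball d j r ⊆ uball d j s ↔ r ≤ s := by
  constructor
  · intro h
    obtain ⟨y₀, hy₀⟩ := mem_Rj.1 hr
    exact hy₀ ▸ mem_uball.1 (h (mem_uball.2 hy₀.le))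
  · exact uball_mono

lemma uball_ssubset_iff (hd0 : ∀ x y, d x y = 0 ↔ x = y) {r s : ℝ}
    (hr : r ∈ Rj d j) (hs : s ∈ Rj d j) :
    uball d j r ⊂ uball d j s ↔ r < s := by
  constructor
  · intro h
    have h1 : r ≤ s := (uball_subset_iff hd0 hr).1 h.subset
    rcases h1.lt_or_eq with h2 | h2
    · exact h2
    · subst h2; exact absurd rfl h.ne
  · intro h
    refine ⟨uball_mono h.le, fun hc => ?_⟩
    have := (uball_subset_iff hd0 hs).1 hc
    linarith

lemma uball_inj_Rj (hd0 : ∀ x y, d x y = 0 ↔ x = y) {r s : ℝ}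
    (hr : r ∈ Rj d j) (hs : s ∈ Rj d j) (h : uball d j r = uball d j s) : r = s :=
  le_antisymm ((uball_subset_iff hd0 hr).1 (le_of_eq h))
    ((uball_subset_iff hd0 hs).1 (le_of_eq h.symm))

end MFPT6




section MFPT7

variable {X : Type*} [Fintype X] [DecidableEq X]
variable {d : X → X → ℝ} {m : X → ℝ} {j : X} {k : ℝ → ℝ}

lemma rtop_pos (hd0 : ∀ x y, d x y = 0 ↔ x = y) (hsymm : ∀ x y, d x y = d y x)
    (hultra : ∀ x y z, d x z ≤ max (d x y) (d y z)) (hX : 1 < Fintype.card X) :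
    0 < rtop d j hd0 := by
  obtain ⟨x, hx⟩ := Fintype.exists_ne_of_one_lt_card hX j
  have h1 : 0 < d j x := d_pos hd0 hsymm hultra (Ne.symm hx)
  exact lt_of_lt_of_le h1 (le_rtop hd0 x)

lemma sball_eq_nr (hd0 : ∀ x y, d x y = 0 ↔ x = y) (hsymm : ∀ x y, d x y = d y x)
    (hultra : ∀ x y z, d x z ≤ max (d x y) (d y z)) (hX : 1 < Fintype.card X) :
    sball d j j = uball d j (nr d j 0) := by
  have hne : (({j}ᶜ : Finset X)).Nonempty := by
    obtain ⟨x, hx⟩ := Fintype.exists_ne_of_one_lt_card hX j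
    exact ⟨x, Finset.mem_compl.2 (by simp [hx])⟩
  rw [sball, if_pos rfl, dif_pos hne]
  obtain ⟨hmem, hpos, hmin⟩ := nr_spec (j := j) hd0 (rtop_pos hd0 hsymm hultra hX)
  congr 1
  apply le_antisymm
  · obtain ⟨y₀, hy₀⟩ := mem_Rj.1 hmem
    have hy₀j : y₀ ≠ j := by
      rintro rfl
      rw [d_self hd0] at hy₀
      linarith
    have hy₀c : y₀ ∈ ({j}ᶜ : Finset X) := Finset.mem_compl.2 (by simp [hy₀j])
    exact hy₀ ▸ Finset.inf'_le _ hy₀c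
  · refine Finset.le_inf' _ _ fun z hz => ?_
    have hzj : z ≠ j := by simpa using Finset.mem_compl.1 hz
    exact hmin _ (mem_Rj.2 ⟨z, rfl⟩) (d_pos hd0 hsymm hultra (Ne.symm hzj))

lemma parentB_eq (hd0 : ∀ x y, d x y = 0 ↔ x = y) (hsymm : ∀ x y, d x y = d y x)
    (hultra : ∀ x y z, d x z ≤ max (d x y) (d y z)) {s : ℝ} (hs : s ∈ Rj d j)
    {i : X} (hlt : s < d j i) :
    parentB d (uball d j s) j = uball d j (nr d j s) := by
  have hne : ((uball d j s)ᶜ : Finset X).Nonempty :=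
    ⟨i, Finset.mem_compl.2 (fun h => absurd (mem_uball.1 h) (not_le.2 hlt))⟩
  have hsr : s < rtop d j hd0 := lt_of_lt_of_le hlt (le_rtop hd0 i)
  obtain ⟨hmem, hgt, hmin⟩ := nr_spec (j := j) hd0 hsr
  rw [parentB, parentR, dif_pos hne]
  congr 1
  apply le_antisymm
  · obtain ⟨y₀, hy₀⟩ := mem_Rj.1 hmem
    have hy₀c : y₀ ∈ ((uball d j s)ᶜ : Finset X) := by
      refine Finset.mem_compl.2 (fun h => ?_)
      have := mem_uball.1 h
      rw [hy₀] at this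
      linarith
    exact hy₀ ▸ Finset.inf'_le _ hy₀c
  · refine Finset.le_inf' _ _ fun z hz => ?_
    have hzlt : s < d j z := lt_of_not_ge (fun h => Finset.mem_compl.1 hz (mem_uball.2 h))
    exact hmin _ (mem_Rj.2 ⟨z, rfl⟩) hzlt

lemma filter_ball_image (hd0 : ∀ x y, d x y = 0 ↔ x = y) (hsymm : ∀ x y, d x y = d y x)
    (hultra : ∀ x y z, d x z ≤ max (d x y) (d y z)) (hX : 1 < Fintype.card X)
    {i : X} (hij : i ≠ j) :
    Finset.univ.filter
        (fun T : Finset X => IsBall d T ∧ sball d j j ⊆ T ∧ T ⊂ uball d i (d i j))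
      = ((Rj d j).filter (fun s => 0 < s ∧ s < d j i)).image (uball d j) := by
  have hiball : uball d i (d i j) = uball d j (d j i) := by
    have hj : j ∈ uball d i (d i j) := mem_uball.2 le_rfl
    rw [← uball_recenter hsymm hultra hj, hsymm i j]
  have hdji : d j i ∈ Rj d j := mem_Rj.2 ⟨i, rfl⟩
  obtain ⟨hn1, hn2, hn3⟩ := nr_spec (j := j) hd0 (rtop_pos hd0 hsymm hultra hX)
  have hsb : sball d j j = uball d j (nr d j 0) := sball_eq_nr hd0 hsymm hultra hX
  ext T
  simp only [Finset.mem_filter, Finset.mem_univ, true_and, Finset.mem_image]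
  constructor
  · rintro ⟨hball, hsub, hssub⟩
    have hj0 : j ∈ sball d j j := by
      rw [hsb]; exact j_mem_uball hd0 hn2.le
    obtain ⟨s, hsmem, rfl⟩ := ball_canonical hd0 hsymm hultra hball (hsub hj0)
    refine ⟨s, ⟨hsmem, ?_, ?_⟩, rfl⟩
    · rw [hsb] at hsub
      have := (uball_subset_iff hd0 hn1).1 hsub
      linarith
    · rw [hiball] at hssub
      exact (uball_ssubset_iff hd0 hsmem hdji).1 hssub
  · rintro ⟨s, hsmem, rfl⟩
    obtain ⟨hs1, hs2, hs3⟩ := hsmem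
    refine ⟨⟨j, s, Rj_nonneg hd0 hsymm hultra hs1, rfl⟩, ?_, ?_⟩
    · rw [hsb]
      exact (uball_subset_iff hd0 hn1).2 (hn3 s hs1 hs2)
    · rw [hiball]
      exact (uball_ssubset_iff hd0 hs1 hdji).2 hs3

end MFPT7

/-- Closed form for the mean first passage time `m_{ij}`:
for `i ≠ j`, `∫₀^∞ (H_t(j,j) − H_t(i,j)) dt` converges and equals
`(−1/λ(B_j⁰))·(1/m(j)) + Σ_{B_j⁰ ⊆ T ⊊ B_n} (1/m(T))·(1/λ(T) − 1/λ(T⁺))`, where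
`B_n = B(i, d(i,j))` and `B_j⁰` is the smallest ball containing `j` with at least
two elements. -/
theorem stmt19 {X : Type*} [Fintype X] [DecidableEq X]
    (hX : 1 < Fintype.card X)
    (d : X → X → ℝ)
    (hd0 : ∀ x y, d x y = 0 ↔ x = y)
    (hsymm : ∀ x y, d x y = d y x)
    (hultra : ∀ x y z, d x z ≤ max (d x y) (d y z))
    (m : X → ℝ) (hm : ∀ x, 0 < m x) (k : ℝ → ℝ)
    (hk : ∀ a b, 0 ≤ a → a ≤ b → k b ≤ k a)
    (hgap : 0 < k (fdiam d Finset.univ))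
    (hprob : ∑ x, m x = 1)
    (i j : X) (hij : i ≠ j) :
    MeasureTheory.IntegrableOn
      (fun t : ℝ =>
        (NormedSpace.exp (t • ultraLap d k m)) j j / m j -
        (NormedSpace.exp (t • ultraLap d k m)) i j / m j)
      (Set.Ioi 0) ∧
    (∫ t in Set.Ioi (0 : ℝ),
        ((NormedSpace.exp (t • ultraLap d k m)) j j / m j -
         (NormedSpace.exp (t • ultraLap d k m)) i j / m j)) =
      (-(lamB d k m (sball d j j) j)⁻¹) * (m j)⁻¹ +
      ∑ T ∈ Finset.univ.filter
          (fun T : Finset X => IsBall d T ∧ sball d j j ⊆ T ∧ T ⊂ uball d i (d i j)),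
        (mass m T)⁻¹ *
          ((lamB d k m T j)⁻¹ - (lamB d k m (parentB d T j) j)⁻¹) := by
  have hji : 0 < d j i := d_pos hd0 hsymm hultra (Ne.symm hij)
  have hdji : d j i ∈ Rj d j := mem_Rj.2 ⟨i, rfl⟩
  have hint := integrand_eq (k := k) hd0 hsymm hultra hm hprob hij
  have hfun : (fun t : ℝ => NormedSpace.exp (t • ultraLap d k m) j j / m j
      - NormedSpace.exp (t • ultraLap d k m) i j / m j)
      = fun t => ∑ r ∈ (Rj d j).filter (fun s => s < d j i),
          Real.exp (t * lamB d k m (uball d j (nr d j r)) j)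
            * (fv d m j r j - fv d m j r i) := funext hint
  have hneg : ∀ r ∈ (Rj d j).filter (fun s => s < d j i),
      lamB d k m (uball d j (nr d j r)) j < 0 := by
    intro r hr
    obtain ⟨h1, h2⟩ := Finset.mem_filter.1 hr
    have hlt : r < rtop d j hd0 := lt_of_lt_of_le h2 (le_rtop hd0 i)
    exact lamB_neg hd0 hsymm hultra hm hk hgap (nr_spec (j := j) hd0 hlt).1
  constructor
  · rw [hfun]
    apply MeasureTheory.integrable_finset_sum
    intro r hr
    exact (exp_integrable_neg (hneg r hr)).mul_const _
  · rw [hfun,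
      MeasureTheory.integral_finset_sum _
        (fun r hr => (exp_integrable_neg (hneg r hr)).mul_const _)]
    have hval : ∀ r ∈ (Rj d j).filter (fun s => s < d j i),
        (∫ t in Set.Ioi (0:ℝ), Real.exp (t * lamB d k m (uball d j (nr d j r)) j)
          * (fv d m j r j - fv d m j r i))
        = -(lamB d k m (uball d j (nr d j r)) j)⁻¹ * (fv d m j r j - fv d m j r i) := by
      intro r hr
      rw [MeasureTheory.integral_mul_const, exp_integral_neg (hneg r hr)]
    rw [Finset.sum_congr rfl hval]
    -- now pure algebra
    -- rewrite RHS
    rw [filter_ball_image hd0 hsymm hultra hX hij, sball_eq_nr hd0 hsymm hultra hX]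
    have hinj : ∀ x ∈ (Rj d j).filter (fun s => 0 < s ∧ s < d j i),
        ∀ y ∈ (Rj d j).filter (fun s => 0 < s ∧ s < d j i),
        uball d j x = uball d j y → x = y := fun x hx y hy h =>
      uball_inj_Rj hd0 (Finset.mem_filter.1 hx).1 (Finset.mem_filter.1 hy).1 h
    rw [Finset.sum_image hinj]
    have hsummand : ∀ s ∈ (Rj d j).filter (fun s => 0 < s ∧ s < d j i),
        (mass m (uball d j s))⁻¹ *
          ((lamB d k m (uball d j s) j)⁻¹ - (lamB d k m (parentB d (uball d j s) j) j)⁻¹)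
        = av d m j s *
          ((lamB d k m (uball d j s) j)⁻¹ - (lamB d k m (uball d j (nr d j s)) j)⁻¹) := by
      intro s hs
      obtain ⟨hs1, _, hs3⟩ := Finset.mem_filter.1 hs
      rw [parentB_eq hd0 hsymm hultra hs1 hs3, av]
    rw [Finset.sum_congr rfl hsummand]
    -- rewrite LHS terms
    have hcval : ∀ r ∈ (Rj d j).filter (fun s => s < d j i),
        -(lamB d k m (uball d j (nr d j r)) j)⁻¹ * (fv d m j r j - fv d m j r i)
        = -(lamB d k m (uball d j (nr d j r)) j)⁻¹ * av d m j r
          + (if nr d j r < d j i then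
              (lamB d k m (uball d j (nr d j r)) j)⁻¹ * av d m j (nr d j r) else 0) := by
      intro r hr
      obtain ⟨h1, h2⟩ := Finset.mem_filter.1 hr
      have hr0 : 0 ≤ r := Rj_nonneg hd0 hsymm hultra h1
      have hlt : r < rtop d j hd0 := lt_of_lt_of_le h2 (le_rtop hd0 i)
      obtain ⟨hn1, hn2, hn3⟩ := nr_spec (j := j) hd0 hlt
      have hnle : nr d j r ≤ d j i := hn3 _ hdji h2
      have hfvj : fv d m j r j = av d m j r - av d m j (nr d j r) := by
        rw [fv, d_self hd0, if_pos hr0, if_pos (hr0.trans hn2.le)]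
      have hfvi : fv d m j r i
          = 0 - (if d j i ≤ nr d j r then av d m j (nr d j r) else 0) := by
        rw [fv, if_neg (not_le.2 h2)]
      rw [hfvj, hfvi]
      by_cases hc : nr d j r < d j i
      · rw [if_pos hc, if_neg (not_le.2 hc)]
        ring
      · rw [if_neg hc, if_pos (le_antisymm hnle (not_lt.1 hc)).ge]
        ring
    rw [Finset.sum_congr rfl hcval, Finset.sum_add_distrib, ← Finset.sum_filter]
    have hbij : ∑ r ∈ ((Rj d j).filter (fun s => s < d j i)).filter
          (fun r => nr d j r < d j i),
            (lamB d k m (uball d j (nr d j r)) j)⁻¹ * av d m j (nr d j r)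
        = ∑ s ∈ (Rj d j).filter (fun s => 0 < s ∧ s < d j i),
            (lamB d k m (uball d j s) j)⁻¹ * av d m j s := by
      refine Finset.sum_nbij' (nr d j) (pr d j) ?_ ?_ ?_ ?_ ?_
      · intro r hr
        obtain ⟨hr', hP⟩ := Finset.mem_filter.1 hr
        obtain ⟨h1, h2⟩ := Finset.mem_filter.1 hr'
        have hlt : r < rtop d j hd0 := lt_of_lt_of_le h2 (le_rtop hd0 i)
        obtain ⟨hn1, hn2, _⟩ := nr_spec (j := j) hd0 hlt
        exact Finset.mem_filter.2
          ⟨hn1, lt_of_le_of_lt (Rj_nonneg hd0 hsymm hultra h1) hn2, hP⟩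
      · intro s hs
        obtain ⟨hs1, hs2, hs3⟩ := Finset.mem_filter.1 hs
        obtain ⟨hp1, hp2, _⟩ := pr_spec (j := j) hd0 hs2
        refine Finset.mem_filter.2 ⟨Finset.mem_filter.2 ⟨hp1, hp2.trans hs3⟩, ?_⟩
        rw [nr_pr hd0 hs1 hs2]
        exact hs3
      · intro r hr
        obtain ⟨hr', _⟩ := Finset.mem_filter.1 hr
        obtain ⟨h1, h2⟩ := Finset.mem_filter.1 hr'
        exact pr_nr hd0 hsymm hultra h1 (lt_of_lt_of_le h2 (le_rtop hd0 i))
      · intro s hs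
        obtain ⟨hs1, hs2, _⟩ := Finset.mem_filter.1 hs
        exact nr_pr hd0 hs1 hs2
      · intro r _
        rfl
    rw [hbij]
    have hF₂eq : (Rj d j).filter (fun s => s < d j i)
        = insert (0:ℝ) ((Rj d j).filter (fun s => 0 < s ∧ s < d j i)) := by
      ext r
      simp only [Finset.mem_filter, Finset.mem_insert]
      constructor
      · rintro ⟨h1, h2⟩
        rcases (Rj_nonneg hd0 hsymm hultra h1).lt_or_eq with h3 | h3
        · exact Or.inr ⟨h1, h3, h2⟩
        · exact Or.inl h3.symm
      · rintro (rfl | ⟨h1, h2, h3⟩)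
        · exact ⟨zero_mem_Rj hd0, hji⟩
        · exact ⟨h1, h3⟩
    have h0G : (0:ℝ) ∉ (Rj d j).filter (fun s => 0 < s ∧ s < d j i) := by
      simp
    rw [hF₂eq, Finset.sum_insert h0G]
    have hav0 : av d m j 0 = (m j)⁻¹ := by
      rw [av, uball_zero_eq hd0 hsymm hultra, mass, Finset.sum_singleton]
    rw [hav0, add_assoc, ← Finset.sum_add_distrib]
    congr 1
    refine Finset.sum_congr rfl fun s hs => ?_
    ring
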